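/- Let $G$ be a finite simple graph with vertex set $\{t_1,\dots,t_s\}$, let $I=I(G)$ be its edge ideal, and let $C_1,C_2$ be two vertex-disjoint odd cycles of $G$ such that some edge $e\in E(G)$ intersects both $C_1$ and $C_2$. Then the monomial $\prod_{t_i\in C_1\cup C_2} t_i$ lies in $I^{(|C_1|+|C_2|)/2}$. -/

import Mathlib

open MvPolynomial

/-- The edge ideal of a graph: generated by the monomials `X u * X w` over edges. -/
noncomputable def edgeIdeal (K : Type*) [Field K] {V : Type*} (G : SimpleGraph V) :
    Ideal (MvPolynomial V K) :=
  Ideal.span {m | ∃ u w, G.Adj u w ∧ m = X u * X w}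

private lemma aux_path (K : Type*) [Field K] {V : Type*} [DecidableEq V] (G : SimpleGraph V) :
    ∀ (n : ℕ) {x y : V} (p : G.Walk x y), p.support.Nodup → p.length = 2 * n →
      ∃ m ∈ (edgeIdeal K G) ^ n,
        (∏ i ∈ p.support.toFinset, X i : MvPolynomial V K) = X y * m := by
  intro n
  induction n with
  | zero =>
    intro x y p hnd hl
    cases p with
    | nil => exact ⟨1, by simp, by simp⟩
    | cons h q => simp at hl
  | succ n ih =>
    intro x y p hnd hl
    cases p with
    | nil => simp at hl
    | @cons _ x₁ _ h q =>
      cases q with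
      | nil => simp at hl; omega
      | @cons _ x₂ _ h' r =>
        simp only [SimpleGraph.Walk.support_cons, List.nodup_cons, List.mem_cons] at hnd
        obtain ⟨hx, hx₁, hr⟩ := hnd
        simp only [SimpleGraph.Walk.length_cons] at hl
        obtain ⟨m, hm, hprod⟩ := ih r hr (by omega)
        have hxy : (X x * X x₁ : MvPolynomial V K) ∈ edgeIdeal K G :=
          Ideal.subset_span ⟨x, x₁, h, rfl⟩
        refine ⟨X x * X x₁ * m, ?_, ?_⟩
        · rw [pow_succ]
          have := Ideal.mul_mem_mul hm hxy
          convert this using 1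
          ring
        · simp only [SimpleGraph.Walk.support_cons, List.toFinset_cons]
          rw [Finset.prod_insert (by simp [List.mem_toFinset]; tauto),
            Finset.prod_insert (by simp [List.mem_toFinset]; tauto), hprod]
          ring

private lemma toFinset_perm {V : Type*} [DecidableEq V] {l l' : List V} (h : l.Perm l') :
    l.toFinset = l'.toFinset := by
  ext x; simp [List.mem_toFinset, h.mem_iff]

private lemma cycle_tail_toFinset {V : Type*} [DecidableEq V] {G : SimpleGraph V} {v : V}
    {c : G.Walk v v} (hc : ¬ c.Nil) : c.support.toFinset = c.support.tail.toFinset := by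
  cases c with
  | nil => simp at hc
  | cons h q =>
    simp only [SimpleGraph.Walk.support_cons, List.toFinset_cons, List.tail_cons]
    exact Finset.insert_eq_self.2 (by simp [List.mem_toFinset, SimpleGraph.Walk.end_mem_support])

private lemma aux_cycle (K : Type*) [Field K] {V : Type*} [DecidableEq V] {G : SimpleGraph V}
    {a v : V} {c : G.Walk v v} (hc : c.IsCycle) {k : ℕ} (hl : c.length = 2 * k + 1)
    (ha : a ∈ c.support) :
    ∃ m ∈ (edgeIdeal K G) ^ k,
      (∏ i ∈ c.support.toFinset, X i : MvPolynomial V K) = X a * m := by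
  have hc' : (c.rotate a ha).IsCycle := hc.rotate ha
  have hlen : (c.rotate a ha).length = c.length := by
    have hspec := congr_arg SimpleGraph.Walk.length (c.take_spec ha)
    rw [SimpleGraph.Walk.length_append] at hspec
    unfold SimpleGraph.Walk.rotate
    rw [SimpleGraph.Walk.length_append]
    omega
  have hfin : c.support.toFinset = (c.rotate a ha).support.toFinset := by
    rw [cycle_tail_toFinset hc.not_nil, cycle_tail_toFinset hc'.not_nil]
    exact (toFinset_perm (SimpleGraph.Walk.support_rotate c a ha).perm).symm
  rw [hfin]
  set c' := c.rotate a ha with hc'def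
  clear_value c'
  clear hfin hc'def
  cases c' with
  | nil => exact absurd rfl hc'.ne_nil
  | @cons _ x₁ _ h q =>
    have hnd : q.support.Nodup := by
      simpa using hc'.support_nodup
    simp only [SimpleGraph.Walk.length_cons] at hlen
    obtain ⟨m, hm, hprod⟩ := aux_path K G k q hnd (by omega)
    refine ⟨m, hm, ?_⟩
    simp only [SimpleGraph.Walk.support_cons, List.toFinset_cons]
    rw [Finset.insert_eq_self.2 (by simp [List.mem_toFinset, SimpleGraph.Walk.end_mem_support]),
      hprod]

theorem disjoint_odd_cycles_joined_by_edge
    (K : Type*) [Field K] {V : Type*} [DecidableEq V]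
    (G : SimpleGraph V) {u w : V}
    (c₁ : G.Walk u u) (c₂ : G.Walk w w)
    (h₁ : c₁.IsCycle) (h₂ : c₂.IsCycle)
    (ho₁ : Odd c₁.length) (ho₂ : Odd c₂.length)
    (hdisj : ∀ x, x ∈ c₁.support → x ∉ c₂.support)
    (hedge : ∃ a b, G.Adj a b ∧ a ∈ c₁.support ∧ b ∈ c₂.support) :
    (∏ i ∈ c₁.support.toFinset ∪ c₂.support.toFinset, X i) ∈
      (edgeIdeal K G) ^ ((c₁.length + c₂.length) / 2) := by
  obtain ⟨a, b, hab, ha, hb⟩ := hedge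
  obtain ⟨k₁, hk₁⟩ := ho₁
  obtain ⟨k₂, hk₂⟩ := ho₂
  have hdisjF : Disjoint c₁.support.toFinset c₂.support.toFinset := by
    rw [Finset.disjoint_left]
    intro x hx hx'
    exact hdisj x (List.mem_toFinset.1 hx) (List.mem_toFinset.1 hx')
  rw [Finset.prod_union hdisjF]
  obtain ⟨m₁, hm₁, e₁⟩ := aux_cycle K h₁ hk₁ ha
  obtain ⟨m₂, hm₂, e₂⟩ := aux_cycle K h₂ hk₂ hb
  rw [e₁, e₂]
  have hexp : (c₁.length + c₂.length) / 2 = k₁ + k₂ + 1 := by omega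
  rw [hexp]
  have hIab : (X a * X b : MvPolynomial V K) ∈ edgeIdeal K G :=
    Ideal.subset_span ⟨a, b, hab, rfl⟩
  have : m₁ * m₂ * (X a * X b) ∈
      (edgeIdeal K G) ^ k₁ * (edgeIdeal K G) ^ k₂ * edgeIdeal K G :=
    Ideal.mul_mem_mul (Ideal.mul_mem_mul hm₁ hm₂) hIab
  rw [← pow_add, ← pow_succ] at this
  convert this using 1
  ring
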